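/- Let Φ be an invertible N×N complex matrix, let Λ be the diagonal N×N matrix with diagonal entries λ_1, …, λ_N ∈ ℂ satisfying |λ_k| ≤ 1 for all k, and set A = Φ Λ Φ⁻¹. Let ε ≥ 0 and let e, ρ : ℕ → (Fin N → ℂ) satisfy e^{n+1} = A e^n + ρ^n for all n, with ‖ρ^n‖₂ ≤ ε for all n ≥ m. Then for every n ≥ m, ‖e^n‖₂ ≤ ‖Φ‖_op · ‖Φ⁻¹‖_op · ( ‖e^m‖₂ + (n − m)·ε ), where ‖·‖_op is the operator norm induced by the Euclidean norm. -/

import Mathlib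

/-- The Euclidean (ℓ²) norm on `Fin N → ℂ`. -/
noncomputable def l2norm {N : ℕ} (v : Fin N → ℂ) : ℝ :=
  ‖(WithLp.equiv 2 (Fin N → ℂ)).symm v‖

/-- The operator norm of a square complex matrix induced by the Euclidean norm. -/
noncomputable def l2OpNorm {N : ℕ} (M : Matrix (Fin N) (Fin N) ℂ) : ℝ :=
  ‖Matrix.toEuclideanCLM (𝕜 := ℂ) M‖

lemma l2norm_mulVec_le {N : ℕ} (M : Matrix (Fin N) (Fin N) ℂ) (v : Fin N → ℂ) :
    l2norm (M.mulVec v) ≤ l2OpNorm M * l2norm v := by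
  have h := (Matrix.toEuclideanCLM (𝕜 := ℂ) M).le_opNorm ((WithLp.equiv 2 (Fin N → ℂ)).symm v)
  change ‖(WithLp.equiv 2 (Fin N → ℂ)).symm (M.mulVec v)‖ ≤ _ at h
  exact h

lemma l2norm_add_le {N : ℕ} (v w : Fin N → ℂ) :
    l2norm (v + w) ≤ l2norm v + l2norm w := by
  have : (WithLp.equiv 2 (Fin N → ℂ)).symm (v + w)
      = (WithLp.equiv 2 (Fin N → ℂ)).symm v + (WithLp.equiv 2 (Fin N → ℂ)).symm w := rfl
  rw [l2norm, this]
  exact norm_add_le _ _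

lemma l2norm_diag_le {N : ℕ} (lam : Fin N → ℂ) (hlam : ∀ k, ‖lam k‖ ≤ 1)
    (v : Fin N → ℂ) : l2norm ((Matrix.diagonal lam).mulVec v) ≤ l2norm v := by
  simp only [l2norm, EuclideanSpace.norm_eq]
  apply Real.sqrt_le_sqrt
  apply Finset.sum_le_sum
  intro i _
  have : (WithLp.equiv 2 (Fin N → ℂ)).symm ((Matrix.diagonal lam).mulVec v) i
      = lam i * v i := by
    simp [Matrix.mulVec_diagonal]
  rw [this]
  have h1 : ‖lam i * v i‖ ≤ ‖v i‖ := by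
    rw [norm_mul]
    calc ‖lam i‖ * ‖v i‖ ≤ 1 * ‖v i‖ := by
          exact mul_le_mul_of_nonneg_right (hlam i) (norm_nonneg _)
      _ = ‖v i‖ := one_mul _
  have : (WithLp.equiv 2 (Fin N → ℂ)).symm v i = v i := rfl
  rw [this]
  exact pow_le_pow_left₀ (norm_nonneg _) h1 2

/-- DMD error bound in terms of operator norms: if the error sequence evolves by
`A = Φ Λ Φ⁻¹` (with `Λ` diagonal of modulus ≤ 1) up to one-step residuals of size
at most `ε`, then the error grows at most linearly, with condition-number factor
`‖Φ‖ ‖Φ⁻¹‖`. -/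
theorem dmd_error_bound_opNorm {N : ℕ} (Φ : Matrix (Fin N) (Fin N) ℂ)
    (hΦ : IsUnit Φ)
    (lam : Fin N → ℂ) (hlam : ∀ k, ‖lam k‖ ≤ 1)
    (A : Matrix (Fin N) (Fin N) ℂ)
    (hA : A = Φ * Matrix.diagonal lam * Φ⁻¹)
    (ε : ℝ) (hε : 0 ≤ ε) (m : ℕ)
    (e ρ : ℕ → (Fin N → ℂ))
    (hrec : ∀ n, e (n + 1) = A.mulVec (e n) + ρ n)
    (hρ : ∀ n, m ≤ n → l2norm (ρ n) ≤ ε) :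
    ∀ n, m ≤ n →
      l2norm (e n) ≤ l2OpNorm Φ * l2OpNorm Φ⁻¹ * (l2norm (e m) + (n - m : ℕ) * ε) := by
  have hdet : IsUnit Φ.det := (Matrix.isUnit_iff_isUnit_det Φ).mp hΦ
  have hinvmul : Φ⁻¹ * Φ = 1 := Matrix.nonsing_inv_mul Φ hdet
  have hmulinv : Φ * Φ⁻¹ = 1 := Matrix.mul_nonsing_inv Φ hdet
  set g : ℕ → (Fin N → ℂ) := fun n => Φ⁻¹.mulVec (e n) with hg
  have hgrec : ∀ n, g (n + 1) = (Matrix.diagonal lam).mulVec (g n) + Φ⁻¹.mulVec (ρ n) := by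
    intro n
    simp only [hg, hrec n, Matrix.mulVec_add]
    congr 1
    rw [Matrix.mulVec_mulVec, Matrix.mulVec_mulVec, hA]
    congr 1
    rw [← Matrix.mul_assoc, ← Matrix.mul_assoc, hinvmul, Matrix.one_mul]
  -- bound on g
  have key : ∀ n, m ≤ n → l2norm (g n) ≤ l2norm (g m) + (n - m : ℕ) * (l2OpNorm Φ⁻¹ * ε) := by
    intro n hn
    induction n with
    | zero =>
        have : m = 0 := Nat.le_zero.mp hn
        subst this; simp
    | succ n ih =>
        rcases Nat.lt_or_ge m (n + 1) with h | h
        · have hmn : m ≤ n := Nat.lt_succ_iff.mp h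
          have ihn := ih hmn
          calc l2norm (g (n + 1))
              ≤ l2norm ((Matrix.diagonal lam).mulVec (g n)) + l2norm (Φ⁻¹.mulVec (ρ n)) := by
                rw [hgrec n]; exact l2norm_add_le _ _
            _ ≤ l2norm (g n) + l2OpNorm Φ⁻¹ * ε := by
                gcongr
                · exact l2norm_diag_le lam hlam _
                · calc l2norm (Φ⁻¹.mulVec (ρ n)) ≤ l2OpNorm Φ⁻¹ * l2norm (ρ n) :=
                        l2norm_mulVec_le _ _
                    _ ≤ l2OpNorm Φ⁻¹ * ε := by
                        exact mul_le_mul_of_nonneg_left (hρ n hmn) (norm_nonneg _)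
            _ ≤ (l2norm (g m) + (n - m : ℕ) * (l2OpNorm Φ⁻¹ * ε)) + l2OpNorm Φ⁻¹ * ε := by
                gcongr
            _ = l2norm (g m) + (n + 1 - m : ℕ) * (l2OpNorm Φ⁻¹ * ε) := by
                rw [Nat.succ_sub hmn]
                push_cast
                ring
        · have : m = n + 1 := le_antisymm hn h
          subst this; simp
  intro n hn
  have heg : e n = Φ.mulVec (g n) := by
    simp only [hg, Matrix.mulVec_mulVec, hmulinv, Matrix.one_mulVec]
  have h1 : l2norm (e n) ≤ l2OpNorm Φ * l2norm (g n) := by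
    rw [heg]; exact l2norm_mulVec_le _ _
  have h2 : l2norm (g m) ≤ l2OpNorm Φ⁻¹ * l2norm (e m) := l2norm_mulVec_le _ _
  have h3 := key n hn
  calc l2norm (e n) ≤ l2OpNorm Φ * l2norm (g n) := h1
    _ ≤ l2OpNorm Φ * (l2OpNorm Φ⁻¹ * l2norm (e m) + (n - m : ℕ) * (l2OpNorm Φ⁻¹ * ε)) := by
        have : l2norm (g n) ≤ l2OpNorm Φ⁻¹ * l2norm (e m) + (n - m : ℕ) * (l2OpNorm Φ⁻¹ * ε) :=
          h3.trans (by gcongr)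
        exact mul_le_mul_of_nonneg_left this (norm_nonneg _)
    _ = l2OpNorm Φ * l2OpNorm Φ⁻¹ * (l2norm (e m) + (n - m : ℕ) * ε) := by ring
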